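/- If P is a G-invariant G-graded module over a crossed product A (with units u_g ∈ A_g and u'_g ∈ A'_g where A' = End_A(P)^op), then the homomorphism θ: C_A(B) → C_{A'}(B'), θ(c)(a ⊗ u) = ac ⊗ u, is G-equivariant: θ(u_g c u_g^{-1}) = u'_g θ(c) u'^{-1}_g (product in A' = End_A(P)^op) for all g ∈ G and c ∈ C_A(B). -/

import Mathlib

/-- `f` represents `θ(c)` on `P = A ⊗_B U`: under the identification `U = P_1`
(valid since `A` is a crossed product, hence strongly graded), the endomorphism
`θ(c) : a ⊗ u ↦ ac ⊗ u` is the unique `A`-linear endomorphism of `P` sending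
`u = 1 ⊗ u ∈ P_1` to `c • u = c ⊗ u`. -/
def IsTheta {G A P : Type*} [Group G] [Ring A] [AddCommGroup P] [Module A P]
    (𝔓 : G → AddSubgroup P) (c : A) (f : P →ₗ[A] P) : Prop :=
  ∀ u ∈ 𝔓 (1 : G), f u = c • u

open DirectSum

/-- In an internally graded ring, the inverse of a homogeneous unit of degree `x`
is homogeneous of degree `x⁻¹`. -/
lemma inv_homog {G A : Type*} [Group G] [DecidableEq G] [Ring A]
    (𝒜 : G → AddSubgroup A)
    (hone : (1 : A) ∈ 𝒜 1)
    (hmul : ∀ {g h : G} {a b : A}, a ∈ 𝒜 g → b ∈ 𝒜 h → a * b ∈ 𝒜 (g * h))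
    (hA : DirectSum.IsInternal 𝒜)
    (v : Aˣ) (x : G) (hv : (v : A) ∈ 𝒜 x) :
    ((v⁻¹ : Aˣ) : A) ∈ 𝒜 x⁻¹ := by
  obtain ⟨d, hd⟩ := hA.2 ((v⁻¹ : Aˣ) : A)
  -- multiplication by `v` as a map of direct sums, shifting degree by `x`
  set m : ∀ j : G, 𝒜 j →+ 𝒜 (x * j) := fun j =>
    AddMonoidHom.mk' (fun a => ⟨(v : A) * (a : A), hmul hv a.2⟩)
      (fun a b => by ext; simp [mul_add]) with hm
  set F : (⨁ i, 𝒜 i) →+ (⨁ i, 𝒜 i) :=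
    DirectSum.toAddMonoid (fun j => (DirectSum.of (fun i => (𝒜 i : AddSubgroup A)) (x * j)).comp (m j)) with hF
  have hcoe : ∀ e : ⨁ i, 𝒜 i,
      DirectSum.coeAddMonoidHom 𝒜 (F e) = (v : A) * DirectSum.coeAddMonoidHom 𝒜 e := by
    intro e
    induction e using DirectSum.induction_on with
    | zero => simp
    | of j a => simp [hF, hm]
    | add e₁ e₂ ih₁ ih₂ => simp [map_add, ih₁, ih₂, mul_add]
  have hFd : F d = DirectSum.of (fun i => (𝒜 i : AddSubgroup A)) 1 ⟨1, hone⟩ := by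
    apply hA.1
    rw [hcoe, hd]
    simp
  have hcomp : ∀ (e : ⨁ i, 𝒜 i) (j : G), ((F e) (x * j) : A) = (v : A) * (e j : A) := by
    intro e j
    induction e using DirectSum.induction_on with
    | zero => simp
    | of i a =>
      rcases eq_or_ne i j with rfl | hij
      · simp [hF, hm, DirectSum.of_eq_same]
      · rw [DirectSum.of_eq_of_ne i j _ hij.symm]
        have hne : (x * i) ≠ (x * j) := by simpa using hij
        simp only [hF, hm, DirectSum.toAddMonoid_of, AddMonoidHom.comp_apply]
        rw [DirectSum.of_eq_of_ne _ _ _ hne.symm]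
        simp
    | add e₁ e₂ ih₁ ih₂ => simp [map_add, ih₁, ih₂, mul_add]
  have hzero : ∀ j : G, j ≠ x⁻¹ → d j = 0 := by
    intro j hj
    have hne : (1 : G) ≠ x * j := fun hxj =>
      hj (by rw [← inv_mul_cancel_left x j, ← hxj, mul_one])
    have h1 : ((F d) (x * j) : A) = 0 := by
      rw [hFd, DirectSum.of_eq_of_ne _ _ _ hne.symm]
      rfl
    rw [hcomp d j] at h1
    have : (d j : A) = 0 := by
      have := congrArg (fun y => ((v⁻¹ : Aˣ) : A) * y) h1
      simpa [← mul_assoc] using this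
    exact Subtype.ext this
  have hdof : d = DirectSum.of (fun i => (𝒜 i : AddSubgroup A)) x⁻¹ (d x⁻¹) := by
    refine DFinsupp.ext fun j => ?_
    rcases eq_or_ne j x⁻¹ with rfl | hj
    · rw [DirectSum.of_eq_same]
    · rw [DirectSum.of_eq_of_ne _ _ _ hj, hzero j hj]
  have : ((v⁻¹ : Aˣ) : A) = (d x⁻¹ : A) := by
    rw [← hd, hdof]
    simp
  rw [this]
  exact (d x⁻¹).2

/-- Let `P = A ⊗_B U` be a `G`-invariant `G`-graded module over a
crossed product `A` (with homogeneous units `u_g ∈ A_g`, and homogeneous units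
`u'_g ∈ A'_g` of `A' = End_A(P)^op`, i.e. `A`-linear automorphisms `u'_g` of `P`
with `u'_g(P_x) ⊆ P_{xg}`).  Then `θ : C_A(B) → C_{A'}(B')`, `θ(c)(a⊗u) = ac⊗u`,
is `G`-equivariant: `θ(u_g c u_g⁻¹) = u'_g θ(c) u'⁻¹_g`, the product taken in
`A' = End_A(P)^op`, i.e. `θ(u_g c u_g⁻¹) = u'⁻¹_g ∘ θ(c) ∘ u'_g` as maps. -/
theorem stmt12 {G A P : Type*} [Group G] [Finite G] [DecidableEq G]
    [Ring A] [AddCommGroup P] [Module A P]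
    (𝒜 : G → AddSubgroup A) (𝔓 : G → AddSubgroup P)
    (hone : (1 : A) ∈ 𝒜 1)
    (hmul : ∀ {g h : G} {a b : A}, a ∈ 𝒜 g → b ∈ 𝒜 h → a * b ∈ 𝒜 (g * h))
    (hA : DirectSum.IsInternal 𝒜)
    -- `A` is a crossed product with chosen homogeneous units `u_g`
    (u : G → Aˣ) (hu : ∀ g : G, (u g : A) ∈ 𝒜 g)
    -- `P` is a `G`-graded `A`-module
    (hP : DirectSum.IsInternal 𝔓)
    (hPs : ∀ {g x : G} {a : A} {p : P}, a ∈ 𝒜 g → p ∈ 𝔓 x → a • p ∈ 𝔓 (g * x))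
    -- chosen homogeneous units `u'_g ∈ A'_g` (so `P` is `G`-invariant)
    (u' : G → (P ≃ₗ[A] P))
    (hu' : ∀ g : G, ∀ x : G, ∀ p ∈ 𝔓 x, u' g p ∈ 𝔓 (x * g))
    (g : G) (c : A) (hc : c ∈ Set.centralizer ((𝒜 1 : AddSubgroup A) : Set A))
    (f h : P →ₗ[A] P)
    (hf : IsTheta 𝔓 c f)
    (hh : IsTheta 𝔓 ((u g : A) * c * ((u g)⁻¹ : Aˣ)) h) :
    h = ((u' g).symm.toLinearMap.comp (f.comp (u' g).toLinearMap)) := by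
  have hinv : ∀ x : G, (((u x)⁻¹ : Aˣ) : A) ∈ 𝒜 x⁻¹ := fun x =>
    inv_homog 𝒜 hone (fun h1 h2 => hmul h1 h2) hA (u x) x (hu x)
  set k : P →ₗ[A] P := ((u' g).symm.toLinearMap.comp (f.comp (u' g).toLinearMap)) with hk
  -- k also satisfies IsTheta for u_g c u_g⁻¹
  have hkt : IsTheta 𝔓 ((u g : A) * c * ((u g)⁻¹ : Aˣ)) k := by
    intro p hp
    have h1 : (u' g) p ∈ 𝔓 g := by simpa using hu' g 1 p hp
    set q : P := (((u g)⁻¹ : Aˣ) : A) • (u' g) p with hq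
    have hq1 : q ∈ 𝔓 1 := by
      have := hPs (hinv g) h1
      simpa using this
    have hpq : (u' g) p = (u g : A) • q := by
      rw [hq, smul_smul]
      simp
    have hfq : f ((u' g) p) = ((u g : A) * c) • q := by
      conv_lhs => rw [hpq]
      rw [map_smul, hf q hq1, smul_smul]
    have hsq : (u' g).symm q = (((u g)⁻¹ : Aˣ) : A) • p := by
      rw [hq, map_smul]
      simp
    calc k p = (u' g).symm (f ((u' g) p)) := rfl
      _ = ((u g : A) * c) • (u' g).symm q := by rw [hfq, map_smul]
      _ = ((u g : A) * c) • (((u g)⁻¹ : Aˣ) : A) • p := by rw [hsq]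
      _ = ((u g : A) * c * ((u g)⁻¹ : Aˣ)) • p := by rw [smul_smul]
  -- uniqueness: two IsTheta maps for the same element agree
  set c' : A := (u g : A) * c * ((u g)⁻¹ : Aˣ) with hc'
  ext p
  obtain ⟨d, hd⟩ := hP.2 p
  rw [← hd]
  have : ∀ e : ⨁ i, 𝔓 i, h (DirectSum.coeAddMonoidHom 𝔓 e) = k (DirectSum.coeAddMonoidHom 𝔓 e) := by
    intro e
    induction e using DirectSum.induction_on with
    | zero => simp
    | of x a =>
      rw [DirectSum.coeAddMonoidHom_of]
      set q : P := (((u x)⁻¹ : Aˣ) : A) • (a : P) with hq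
      have hq1 : q ∈ 𝔓 1 := by
        have := hPs (hinv x) a.2
        simpa using this
      have haq : (a : P) = (u x : A) • q := by
        rw [hq, smul_smul]
        simp
      have e1 : h (a : P) = (u x : A) • (((u g : A) * c * ((u g)⁻¹ : Aˣ)) • q) := by
        conv_lhs => rw [haq]
        rw [map_smul, hh q hq1]
      have e2 : k (a : P) = (u x : A) • (((u g : A) * c * ((u g)⁻¹ : Aˣ)) • q) := by
        conv_lhs => rw [haq]
        rw [map_smul, hkt q hq1]
      rw [e1, e2]
    | add e₁ e₂ ih₁ ih₂ => simp only [map_add, ih₁, ih₂]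
  exact this d
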